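/- Let (a_v^{p_1,…,p_k}) be nonnegative reals satisfying the peeling equations. Then for all m, n, v ≥ 0 and all perimeters p_1, …, p_k ≥ 1, the iterated discrete derivative Δ_v^m Δ_k^n a_v^{p_1,…,p_k} is nonnegative, where Δ_v takes the difference in v and Δ_k appends a hole of perimeter 1. -/
import Mathlib


/-- The peeling equations (see the paper): `τ (i+1) j` is the number of triangulations
of the `(i+1)`-gon with `j+1` vertices in total. -/
def SatisfiesPeeling (τ : ℕ → ℕ → ℝ) (a : Multiset ℕ → ℕ → ℝ) : Prop :=
  ∀ (p₁ : ℕ), 1 ≤ p₁ → ∀ rest : Multiset ℕ, (∀ q ∈ rest, 1 ≤ q) → ∀ v : ℕ,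
    a (p₁ ::ₘ rest) v =
      a ((p₁ + 1) ::ₘ rest) v
      + 2 * ∑ i ∈ Finset.range p₁, ∑' j : ℕ, τ (i + 1) j * a ((p₁ - i) ::ₘ rest) (v + j)
      + ∑ i ∈ Finset.range p₁, a ((i + 1) ::ₘ ((p₁ - i) ::ₘ rest)) v

/-- The discrete derivative in the volume: `(Δ_v a)_v = a_v - a_{v+1}`. -/
def deltaV (a : Multiset ℕ → ℕ → ℝ) : Multiset ℕ → ℕ → ℝ :=
  fun m v => a m v - a m (v + 1)

/-- The discrete derivative in the number of holes (appending a hole of perimeter `1`):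
`(Δ_k a)^{p₁,…,p_k} = a^{p₁,…,p_k} - a^{p₁,…,p_k,1}`. -/
def deltaK (a : Multiset ℕ → ℕ → ℝ) : Multiset ℕ → ℕ → ℝ :=
  fun m v => a m v - a (1 ::ₘ m) v

/-- Bundle of properties preserved by the discrete derivatives. -/
def Good (τ : ℕ → ℕ → ℝ) (b : Multiset ℕ → ℕ → ℝ) : Prop :=
  SatisfiesPeeling τ b ∧
  (∀ (i : ℕ) (m : Multiset ℕ) (v : ℕ), Summable fun j : ℕ => τ i j * b m (v + j)) ∧
  (∀ P : Multiset ℕ, P ≠ 0 → (∀ q ∈ P, 1 ≤ q) → ∀ v, 0 ≤ b P v)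

lemma sum_deltaV {τ : ℕ → ℕ → ℝ} {b : Multiset ℕ → ℕ → ℝ}
    (hsum : ∀ (i : ℕ) (m : Multiset ℕ) (v : ℕ), Summable fun j : ℕ => τ i j * b m (v + j)) :
    ∀ (i : ℕ) (m : Multiset ℕ) (v : ℕ), Summable fun j : ℕ => τ i j * deltaV b m (v + j) := by
  intro i m v
  exact ((hsum i m v).sub (hsum i m (v + 1))).congr fun j => by
    simp only [deltaV, mul_sub, add_right_comm v 1 j]

lemma sum_deltaK {τ : ℕ → ℕ → ℝ} {b : Multiset ℕ → ℕ → ℝ}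
    (hsum : ∀ (i : ℕ) (m : Multiset ℕ) (v : ℕ), Summable fun j : ℕ => τ i j * b m (v + j)) :
    ∀ (i : ℕ) (m : Multiset ℕ) (v : ℕ), Summable fun j : ℕ => τ i j * deltaK b m (v + j) := by
  intro i m v
  exact ((hsum i m v).sub (hsum i (1 ::ₘ m) v)).congr fun j => by
    simp only [deltaK, mul_sub]

lemma peeling_deltaV {τ : ℕ → ℕ → ℝ} {b : Multiset ℕ → ℕ → ℝ}
    (hpeel : SatisfiesPeeling τ b)
    (hsum : ∀ (i : ℕ) (m : Multiset ℕ) (v : ℕ), Summable fun j : ℕ => τ i j * b m (v + j)) :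
    SatisfiesPeeling τ (deltaV b) := by
  intro p₁ hp rest hrest v
  have h1 := hpeel p₁ hp rest hrest v
  have h2 := hpeel p₁ hp rest hrest (v + 1)
  have key : ∀ (i : ℕ) (m : Multiset ℕ),
      ∑' j : ℕ, τ i j * deltaV b m (v + j)
        = (∑' j : ℕ, τ i j * b m (v + j)) - ∑' j : ℕ, τ i j * b m (v + 1 + j) := by
    intro i m
    rw [← Summable.tsum_sub (hsum i m v) (hsum i m (v + 1))]
    exact tsum_congr fun j => by
      simp only [deltaV, mul_sub, add_right_comm v 1 j]
  simp only [key]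
  simp only [deltaV]
  rw [h1, h2]
  simp only [Finset.sum_sub_distrib]
  ring

lemma peeling_deltaK {τ : ℕ → ℕ → ℝ} {b : Multiset ℕ → ℕ → ℝ}
    (hpeel : SatisfiesPeeling τ b)
    (hsum : ∀ (i : ℕ) (m : Multiset ℕ) (v : ℕ), Summable fun j : ℕ => τ i j * b m (v + j)) :
    SatisfiesPeeling τ (deltaK b) := by
  intro p₁ hp rest hrest v
  have h1 := hpeel p₁ hp rest hrest v
  have hrest1 : ∀ q ∈ (1 ::ₘ rest), 1 ≤ q := by
    intro q hq
    rcases Multiset.mem_cons.mp hq with h | h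
    · omega
    · exact hrest q h
  have h2 := hpeel p₁ hp (1 ::ₘ rest) hrest1 v
  simp only [show ∀ (x : ℕ) (s : Multiset ℕ), x ::ₘ 1 ::ₘ s = 1 ::ₘ x ::ₘ s from
    fun x s => Multiset.cons_swap x 1 s] at h2
  have key : ∀ (i : ℕ) (m : Multiset ℕ),
      ∑' j : ℕ, τ i j * deltaK b m (v + j)
        = (∑' j : ℕ, τ i j * b m (v + j)) - ∑' j : ℕ, τ i j * b (1 ::ₘ m) (v + j) := by
    intro i m
    rw [← Summable.tsum_sub (hsum i m v) (hsum i (1 ::ₘ m) v)]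
    exact tsum_congr fun j => by simp only [deltaK, mul_sub]
  simp only [key]
  simp only [deltaK]
  rw [h1, h2]
  simp only [Finset.sum_sub_distrib]
  ring

lemma nonneg_deltaK {τ : ℕ → ℕ → ℝ} {b : Multiset ℕ → ℕ → ℝ}
    (hτ : ∀ i j, 0 ≤ τ i j) (hpeel : SatisfiesPeeling τ b)
    (hb : ∀ P : Multiset ℕ, P ≠ 0 → (∀ q ∈ P, 1 ≤ q) → ∀ v, 0 ≤ b P v) :
    ∀ P : Multiset ℕ, P ≠ 0 → (∀ q ∈ P, 1 ≤ q) → ∀ v, 0 ≤ deltaK b P v := by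
  intro P hP hPq v
  obtain ⟨p₁, hp₁⟩ := Multiset.exists_mem_of_ne_zero hP
  have hp1 : 1 ≤ p₁ := hPq p₁ hp₁
  set rest := P.erase p₁ with hrestdef
  have hcons : p₁ ::ₘ rest = P := Multiset.cons_erase hp₁
  have hrest : ∀ q ∈ rest, 1 ≤ q := fun q hq => hPq q (Multiset.mem_of_mem_erase hq)
  have hvalid : ∀ x : ℕ, 1 ≤ x → ∀ (s : Multiset ℕ), (∀ q ∈ s, 1 ≤ q) →
      ∀ w, 0 ≤ b (x ::ₘ s) w := by
    intro x hx s hs w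
    refine hb _ (Multiset.cons_ne_zero) ?_ w
    intro q hq
    rcases Multiset.mem_cons.mp hq with h | h
    · omega
    · exact hs q h
  have heq := hpeel p₁ hp1 rest hrest v
  rw [hcons] at heq
  have hnn : ∀ i ∈ Finset.range p₁, 0 ≤ b ((i + 1) ::ₘ ((p₁ - i) ::ₘ rest)) v := by
    intro i hi
    have hi' : i < p₁ := Finset.mem_range.mp hi
    refine hvalid (i + 1) (by omega) _ ?_ v
    intro q hq
    rcases Multiset.mem_cons.mp hq with h | h
    · omega
    · exact hrest q h
  have hmem : p₁ - 1 ∈ Finset.range p₁ := Finset.mem_range.mpr (by omega)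
  have key := Finset.single_le_sum hnn hmem
  have e1 : p₁ - 1 + 1 = p₁ := by omega
  have e2 : p₁ - (p₁ - 1) = 1 := by omega
  rw [e1, e2, Multiset.cons_swap, hcons] at key
  have hT1 : 0 ≤ b ((p₁ + 1) ::ₘ rest) v := hvalid (p₁ + 1) (by omega) rest hrest v
  have hS : 0 ≤ ∑ i ∈ Finset.range p₁, ∑' j : ℕ, τ (i + 1) j * b ((p₁ - i) ::ₘ rest) (v + j) := by
    refine Finset.sum_nonneg fun i hi => tsum_nonneg fun j => mul_nonneg (hτ _ _) ?_
    have hi' : i < p₁ := Finset.mem_range.mp hi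
    exact hvalid (p₁ - i) (by omega) rest hrest (v + j)
  simp only [deltaK]
  linarith

lemma nonneg_deltaV {τ : ℕ → ℕ → ℝ} {b : Multiset ℕ → ℕ → ℝ}
    (hτ : ∀ i j, 0 ≤ τ i j) (hτ11 : 1 ≤ τ 1 1) (hpeel : SatisfiesPeeling τ b)
    (hsum : ∀ (i : ℕ) (m : Multiset ℕ) (v : ℕ), Summable fun j : ℕ => τ i j * b m (v + j))
    (hb : ∀ P : Multiset ℕ, P ≠ 0 → (∀ q ∈ P, 1 ≤ q) → ∀ v, 0 ≤ b P v) :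
    ∀ P : Multiset ℕ, P ≠ 0 → (∀ q ∈ P, 1 ≤ q) → ∀ v, 0 ≤ deltaV b P v := by
  intro P hP hPq v
  obtain ⟨p₁, hp₁⟩ := Multiset.exists_mem_of_ne_zero hP
  have hp1 : 1 ≤ p₁ := hPq p₁ hp₁
  set rest := P.erase p₁ with hrestdef
  have hcons : p₁ ::ₘ rest = P := Multiset.cons_erase hp₁
  have hrest : ∀ q ∈ rest, 1 ≤ q := fun q hq => hPq q (Multiset.mem_of_mem_erase hq)
  have hvalid : ∀ x : ℕ, 1 ≤ x → ∀ (s : Multiset ℕ), (∀ q ∈ s, 1 ≤ q) →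
      ∀ w, 0 ≤ b (x ::ₘ s) w := by
    intro x hx s hs w
    refine hb _ (Multiset.cons_ne_zero) ?_ w
    intro q hq
    rcases Multiset.mem_cons.mp hq with h | h
    · omega
    · exact hs q h
  have heq := hpeel p₁ hp1 rest hrest v
  rw [hcons] at heq
  have hterm : ∀ i ∈ Finset.range p₁,
      0 ≤ ∑' j : ℕ, τ (i + 1) j * b ((p₁ - i) ::ₘ rest) (v + j) := by
    intro i hi
    have hi' : i < p₁ := Finset.mem_range.mp hi
    exact tsum_nonneg fun j => mul_nonneg (hτ _ _) (hvalid (p₁ - i) (by omega) rest hrest (v + j))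
  have h0mem : (0 : ℕ) ∈ Finset.range p₁ := Finset.mem_range.mpr (by omega)
  have hS0 := Finset.single_le_sum hterm h0mem
  simp only [Nat.sub_zero, zero_add] at hS0
  rw [hcons] at hS0
  have hj : τ 1 1 * b P (v + 1) ≤ ∑' j : ℕ, τ 1 j * b P (v + j) :=
    Summable.le_tsum (hsum 1 P v) 1 fun j _ => mul_nonneg (hτ _ _) (hb P hP hPq (v + j))
  have hmul : b P (v + 1) ≤ τ 1 1 * b P (v + 1) :=
    le_mul_of_one_le_left (hb P hP hPq (v + 1)) hτ11
  have hT1 : 0 ≤ b ((p₁ + 1) ::ₘ rest) v := hvalid (p₁ + 1) (by omega) rest hrest v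
  have hS3 : 0 ≤ ∑ i ∈ Finset.range p₁, b ((i + 1) ::ₘ ((p₁ - i) ::ₘ rest)) v := by
    refine Finset.sum_nonneg fun i hi => ?_
    have hi' : i < p₁ := Finset.mem_range.mp hi
    refine hvalid (i + 1) (by omega) _ ?_ v
    intro q hq
    rcases Multiset.mem_cons.mp hq with h | h
    · omega
    · exact hrest q h
  have hnn1 : 0 ≤ b P (v + 1) := hb P hP hPq (v + 1)
  simp only [deltaV]
  linarith

lemma good_deltaK {τ : ℕ → ℕ → ℝ} {b : Multiset ℕ → ℕ → ℝ}
    (hτ : ∀ i j, 0 ≤ τ i j) (h : Good τ b) : Good τ (deltaK b) :=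
  ⟨peeling_deltaK h.1 h.2.1, sum_deltaK h.2.1, nonneg_deltaK hτ h.1 h.2.2⟩

lemma good_deltaV {τ : ℕ → ℕ → ℝ} {b : Multiset ℕ → ℕ → ℝ}
    (hτ : ∀ i j, 0 ≤ τ i j) (hτ11 : 1 ≤ τ 1 1) (h : Good τ b) : Good τ (deltaV b) :=
  ⟨peeling_deltaV h.1 h.2.1, sum_deltaV h.2.1, nonneg_deltaV hτ hτ11 h.1 h.2.1 h.2.2⟩

/-- Let `a_v^{p₁,…,p_k}` be nonnegative reals satisfying the peeling
equations.  Then all iterated discrete derivatives `Δ_v^m Δ_k^n a_v^{p₁,…,p_k}` are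
nonnegative. -/
theorem iterated_derivatives_nonneg
    (τ : ℕ → ℕ → ℝ) (hτ : ∀ i j, 0 ≤ τ i j) (hτ11 : 1 ≤ τ 1 1)
    (a : Multiset ℕ → ℕ → ℝ) (ha : ∀ m v, 0 ≤ a m v)
    (hsum : ∀ (i : ℕ) (m : Multiset ℕ) (v : ℕ),
      Summable fun j : ℕ => τ i j * a m (v + j))
    (hpeel : SatisfiesPeeling τ a) :
    ∀ (m n : ℕ) (P : Multiset ℕ), P ≠ 0 → (∀ q ∈ P, 1 ≤ q) → ∀ v : ℕ,
      0 ≤ (deltaV^[m] (deltaK^[n] a)) P v := by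
  have good_a : Good τ a := ⟨hpeel, hsum, fun P _ _ v => ha P v⟩
  have stepK : ∀ n, Good τ (deltaK^[n] a) := by
    intro n
    induction n with
    | zero => simpa using good_a
    | succ n ih =>
      rw [Function.iterate_succ_apply']
      exact good_deltaK hτ ih
  have stepV : ∀ m n, Good τ (deltaV^[m] (deltaK^[n] a)) := by
    intro m n
    induction m with
    | zero => simpa using stepK n
    | succ m ih =>
      rw [Function.iterate_succ_apply']
      exact good_deltaV hτ hτ11 ih
  intro m n P hP hPq v
  exact (stepV m n).2.2 P hP hPq v
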